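/- Let δ > 0, 1 < p < 2, and let w₁, w₂ be positive C² functions on ℝ with w₁'' - δ²w₁ + μ₁w₁^{2p-1} + βw₁^{p-1}w₂^p = 0 and w₂'' - δ²w₂ + μ₂w₂^{2p-1} + βw₂^{p-1}w₁^p = 0 (μ₁, μ₂, β > 0). If (tₙ) is a sequence of local minimum points of w₁ with w₁(tₙ) → 0, then βw₂(tₙ)^p < δ²w₁(tₙ)^{2-p} for all n, and consequently w₂(tₙ) → 0 as well. -/

import Mathlib

open Filter

lemma second_deriv_nonneg_of_isLocalMin (f : ℝ → ℝ) (hf : ContDiff ℝ 2 f) (t : ℝ)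
    (h : IsLocalMin f t) : 0 ≤ deriv (deriv f) t := by
  by_contra hneg
  push_neg at hneg
  have hd1 : Differentiable ℝ f := hf.differentiable (by norm_num)
  have hd2 : Differentiable ℝ (deriv f) := (hf.iterate_deriv' 1 1).differentiable (by norm_num)
  have hg0 : deriv f t = 0 := h.deriv_eq_zero
  have hder : HasDerivAt (deriv f) (deriv (deriv f) t) t := (hd2 t).hasDerivAt
  have hslope : Tendsto (slope (deriv f) t) (nhdsWithin t {t}ᶜ) (nhds (deriv (deriv f) t)) :=
    hasDerivAt_iff_tendsto_slope.mp hder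
  have hneg' : ∀ᶠ x in nhdsWithin t (Set.Ioi t), deriv f x < 0 := by
    have h1 : ∀ᶠ x in nhdsWithin t {t}ᶜ, slope (deriv f) t x < 0 :=
      hslope.eventually_lt_const hneg
    have h2 : ∀ᶠ x in nhdsWithin t (Set.Ioi t), slope (deriv f) t x < 0 :=
      h1.filter_mono (nhdsWithin_mono t (fun x hx => ne_of_gt hx))
    filter_upwards [h2, self_mem_nhdsWithin] with x hx hx'
    rw [slope_def_field, hg0, sub_zero, div_neg_iff] at hx
    rcases hx with ⟨_, h⟩ | ⟨h, _⟩
    · linarith [Set.mem_Ioi.mp hx']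
    · exact h
  obtain ⟨u, hu, hsub⟩ := mem_nhdsGT_iff_exists_Ioo_subset.mp hneg'
  obtain ⟨ε, hε, hball⟩ := Metric.eventually_nhds_iff.mp (show ∀ᶠ x in nhds t, f t ≤ f x from h)
  set s : ℝ := min u (t + ε) with hs
  have hts : t < s := lt_min hu (by linarith)
  set m : ℝ := (t + s) / 2 with hm
  have htm : t < m := by simp only [hm]; linarith
  have hms : m < s := by simp only [hm]; linarith
  have hanti : StrictAntiOn f (Set.Icc t m) := by
    apply strictAntiOn_of_deriv_neg (convex_Icc t m) (hd1.continuous.continuousOn)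
    intro x hx
    rw [interior_Icc] at hx
    exact hsub ⟨hx.1, lt_of_lt_of_le (lt_of_lt_of_le hx.2 hms.le) (min_le_left _ _)⟩
  have h1 : f m < f t := hanti (Set.left_mem_Icc.mpr htm.le) (Set.right_mem_Icc.mpr htm.le) htm
  have h2 : f t ≤ f m := by
    apply hball
    rw [Real.dist_eq, abs_sub_lt_iff]
    have : s ≤ t + ε := min_le_right _ _
    constructor <;> simp only [hm] <;> linarith
  linarith

theorem stmt_9 (δ μ₁ μ₂ β p : ℝ) (hδ : 0 < δ) (hμ₁ : 0 < μ₁) (hμ₂ : 0 < μ₂)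
    (hβ : 0 < β) (hp₁ : 1 < p) (hp₂ : p < 2) (w₁ w₂ : ℝ → ℝ)
    (hw₁ : ContDiff ℝ 2 w₁) (hw₂ : ContDiff ℝ 2 w₂)
    (hpos₁ : ∀ t, 0 < w₁ t) (hpos₂ : ∀ t, 0 < w₂ t)
    (heq₁ : ∀ t, deriv (deriv w₁) t - δ^2 * w₁ t + μ₁ * w₁ t ^ (2*p - 1)
      + β * w₁ t ^ (p - 1) * w₂ t ^ p = 0)
    (heq₂ : ∀ t, deriv (deriv w₂) t - δ^2 * w₂ t + μ₂ * w₂ t ^ (2*p - 1)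
      + β * w₂ t ^ (p - 1) * w₁ t ^ p = 0)
    (tn : ℕ → ℝ) (hmin : ∀ n, IsLocalMin w₁ (tn n))
    (hlim : Tendsto (fun n => w₁ (tn n)) atTop (nhds 0)) :
    (∀ n, β * w₂ (tn n) ^ p < δ^2 * w₁ (tn n) ^ (2 - p)) ∧
    Tendsto (fun n => w₂ (tn n)) atTop (nhds 0) := by
  have key : ∀ n, β * w₂ (tn n) ^ p < δ^2 * w₁ (tn n) ^ (2 - p) := by
    intro n
    set t := tn n
    have h2 : 0 ≤ deriv (deriv w₁) t := second_deriv_nonneg_of_isLocalMin w₁ hw₁ t (hmin n)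
    have heq := heq₁ t
    have hμpos : 0 < μ₁ * w₁ t ^ (2*p - 1) :=
      mul_pos hμ₁ (Real.rpow_pos_of_pos (hpos₁ t) _)
    have hlt : β * w₁ t ^ (p - 1) * w₂ t ^ p < δ^2 * w₁ t := by linarith
    have hw1pos : (0:ℝ) < w₁ t ^ (p - 1) := Real.rpow_pos_of_pos (hpos₁ t) _
    rw [show δ^2 * w₁ t = δ^2 * w₁ t ^ (2 - p) * w₁ t ^ (p - 1) by
      rw [mul_assoc, ← Real.rpow_add (hpos₁ t)]
      norm_num] at hlt
    have := (mul_lt_mul_iff_of_pos_right hw1pos).mp (by linarith [hlt] :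
      β * w₂ t ^ p * w₁ t ^ (p - 1) < δ^2 * w₁ t ^ (2 - p) * w₁ t ^ (p - 1))
    exact this
  refine ⟨key, ?_⟩
  have hp0 : p ≠ 0 := by linarith
  have hT1 : Tendsto (fun n => w₁ (tn n) ^ (2 - p)) atTop (nhds 0) := by
    have hc : ContinuousAt (fun x : ℝ => x ^ (2 - p)) 0 :=
      Real.continuousAt_rpow_const 0 (2 - p) (Or.inr (by linarith))
    have := hc.tendsto.comp hlim
    rwa [Real.zero_rpow (ne_of_gt (by linarith) : 2 - p ≠ 0)] at this
  have hTp : Tendsto (fun n => w₂ (tn n) ^ p) atTop (nhds 0) := by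
    apply squeeze_zero (fun n => (Real.rpow_pos_of_pos (hpos₂ (tn n)) p).le)
      (fun n => ?_) (by simpa using hT1.const_mul (δ^2 / β))
    have := key n
    rw [div_mul_eq_mul_div, le_div_iff₀ hβ, mul_comm]
    nlinarith [this]
  have hc : ContinuousAt (fun x : ℝ => x ^ p⁻¹) 0 :=
    Real.continuousAt_rpow_const 0 p⁻¹ (Or.inr (by positivity))
  have := hc.tendsto.comp hTp
  rw [Real.zero_rpow (by positivity : p⁻¹ ≠ 0)] at this
  convert this using 2 with n
  simp only [Function.comp]
  rw [Real.rpow_rpow_inv (hpos₂ (tn n)).le hp0]
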